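/- Let K, L be symmetric convex bodies in ℝⁿ with γₙ(K), γₙ(L) > 0, where γₙ is the standard Gaussian measure. Assume d/dλ γₙ((1−λ)K + λL)|_{λ=0⁺} = γₙ(K;L) − γₙ(K;K) with γₙ(K;M) := liminf_{ε→0⁺}(γₙ(K+εM) − γₙ(K))/ε, and assume the Gaussian Brunn–Minkowski inequality γₙ((1−λ)K + λL)^{1/n} ≥ (1−λ)γₙ(K)^{1/n} + λγₙ(L)^{1/n} holds (Eskenazis–Moschidis). Then γₙ(K;L) − γₙ(K;K) ≥ n·γₙ(L)^{1/n}·γₙ(K)^{(n−1)/n} − n·γₙ(K). -/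

import Mathlib

open Pointwise MeasureTheory Filter Set

/-- The mixed measure `μ(K;M) = liminf_{ε→0⁺} (μ(K+εM)-μ(K))/ε`. -/
noncomputable def mixm {n : ℕ} (μ : Measure (EuclideanSpace ℝ (Fin n)))
    (K M : Set (EuclideanSpace ℝ (Fin n))) : ℝ :=
  liminf (fun ε : ℝ => ((μ (K + ε • M)).toReal - (μ K).toReal) / ε)
    (nhdsWithin 0 (Set.Ioi 0))

lemma aux_nonneg_deriv {h : ℝ → ℝ} {E : ℝ} (hd : HasDerivWithinAt h E (Set.Ici 0) 0)
    (h0 : h 0 = 0) (hpos : ∀ᶠ l in nhdsWithin 0 (Set.Ioi 0), 0 ≤ h l) : 0 ≤ E := by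
  have hd' := hd.mono (Set.Ioi_subset_Ici le_rfl)
  rw [hasDerivWithinAt_iff_tendsto_slope] at hd'
  have hset : Set.Ioi (0:ℝ) \ {0} = Set.Ioi 0 :=
    Set.diff_singleton_eq_self (by simp)
  rw [hset] at hd'
  refine ge_of_tendsto hd' ?_
  filter_upwards [hpos, self_mem_nhdsWithin] with l hl hl'
  have hl0 : (0:ℝ) < l := hl'
  rw [slope_def_field]
  simp only [h0, sub_zero]
  positivity

theorem stmt16 {n : ℕ} (hn : 1 ≤ n) (γ : Measure (EuclideanSpace ℝ (Fin n)))
    (hγ : γ = volume.withDensity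
      (fun x => ENNReal.ofReal ((2 * Real.pi) ^ (-(n:ℝ)/2) * Real.exp (-‖x‖^2/2))))
    (K L : Set (EuclideanSpace ℝ (Fin n)))
    (hK : IsCompact K) (hKc : Convex ℝ K) (hKi : (interior K).Nonempty) (hKs : K = -K)
    (hL : IsCompact L) (hLc : Convex ℝ L) (hLi : (interior L).Nonempty) (hLs : L = -L)
    (hγK : 0 < γ K) (hγL : 0 < γ L)
    (hGBM : ∀ l ∈ Set.Icc (0:ℝ) 1,
      (1-l) * (γ K).toReal ^ ((1:ℝ)/n) + l * (γ L).toReal ^ ((1:ℝ)/n) ≤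
        (γ ((1-l) • K + l • L)).toReal ^ ((1:ℝ)/n))
    (hderiv : HasDerivWithinAt (fun l : ℝ => (γ ((1-l) • K + l • L)).toReal)
      (mixm γ K L - mixm γ K K) (Set.Ici 0) 0) :
    (n:ℝ) * (γ L).toReal ^ ((1:ℝ)/n) * (γ K).toReal ^ (((n:ℝ)-1)/n)
        - n * (γ K).toReal ≤ mixm γ K L - mixm γ K K := by
  set D := mixm γ K L - mixm γ K K with hD
  set c := (γ K).toReal with hcdef
  set d := (γ L).toReal with hddef
  have hn0 : (n:ℝ) ≠ 0 := by positivity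
  -- γ K is finite
  have hKm : MeasurableSet K := hK.measurableSet
  have hfin : γ K ≠ ⊤ := by
    rw [hγ, withDensity_apply _ hKm]
    have hb : ∫⁻ x in K, ENNReal.ofReal ((2 * Real.pi) ^ (-(n:ℝ)/2) * Real.exp (-‖x‖^2/2)) ∂volume
        ≤ ∫⁻ _x in K, ENNReal.ofReal ((2 * Real.pi) ^ (-(n:ℝ)/2)) ∂volume := by
      refine lintegral_mono fun x => ENNReal.ofReal_le_ofReal ?_
      have h1 : Real.exp (-‖x‖^2/2) ≤ 1 :=
        Real.exp_le_one_iff.2 (by nlinarith [sq_nonneg ‖x‖])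
      have h2 : (0:ℝ) ≤ (2 * Real.pi) ^ (-(n:ℝ)/2) :=
        Real.rpow_nonneg (by positivity) _
      nlinarith
    refine ne_top_of_le_ne_top ?_ hb
    rw [setLIntegral_const]
    exact ENNReal.mul_ne_top ENNReal.ofReal_ne_top hK.measure_lt_top.ne
  have hc : 0 < c := ENNReal.toReal_pos hγK.ne' hfin
  -- f 0 = c
  have hLne : L.Nonempty := hLi.mono interior_subset
  have hset0 : (1-(0:ℝ)) • K + (0:ℝ) • L = K := by
    rw [sub_zero, one_smul, Set.zero_smul_set hLne]
    simp [Set.add_singleton]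
  have hf0 : (γ ((1-(0:ℝ)) • K + (0:ℝ) • L)).toReal = c := by rw [hset0]
  -- chain rule: F l = f l ^ (1/n)
  have hrpow : HasDerivAt (fun y : ℝ => y ^ ((1:ℝ)/n)) ((1/n) * c ^ ((1:ℝ)/n - 1)) c :=
    Real.hasDerivAt_rpow_const (Or.inl hc.ne')
  have hrpow2 : HasDerivAt (fun y : ℝ => y ^ ((1:ℝ)/n)) ((1/n) * c ^ ((1:ℝ)/n - 1))
      ((γ ((1-(0:ℝ)) • K + (0:ℝ) • L)).toReal) := by rw [hf0]; exact hrpow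
  have hF : HasDerivWithinAt (fun l : ℝ => (γ ((1-l) • K + l • L)).toReal ^ ((1:ℝ)/n))
      ((1/n) * c ^ ((1:ℝ)/n - 1) * D) (Set.Ici 0) 0 :=
    by have := hrpow2.comp_hasDerivWithinAt 0 hderiv; exact this
  -- linear comparison function
  have hg : HasDerivAt (fun l : ℝ => (1-l) * c ^ ((1:ℝ)/n) + l * d ^ ((1:ℝ)/n))
      (d ^ ((1:ℝ)/n) - c ^ ((1:ℝ)/n)) 0 := by
    have h1 : HasDerivAt (fun l : ℝ => (1-l) * c ^ ((1:ℝ)/n) + l * d ^ ((1:ℝ)/n))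
        ((-1) * c ^ ((1:ℝ)/n) + 1 * d ^ ((1:ℝ)/n)) 0 :=
      (((hasDerivAt_id (0:ℝ)).const_sub 1).mul_const _).add
        ((hasDerivAt_id (0:ℝ)).mul_const _)
    convert h1 using 1; ring
  -- difference function
  have hh : HasDerivWithinAt
      (fun l : ℝ => (γ ((1-l) • K + l • L)).toReal ^ ((1:ℝ)/n)
        - ((1-l) * c ^ ((1:ℝ)/n) + l * d ^ ((1:ℝ)/n)))
      ((1/n) * c ^ ((1:ℝ)/n - 1) * D - (d ^ ((1:ℝ)/n) - c ^ ((1:ℝ)/n)))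
      (Set.Ici 0) 0 := hF.sub (hg.hasDerivWithinAt)
  have hE : 0 ≤ (1/n) * c ^ ((1:ℝ)/n - 1) * D - (d ^ ((1:ℝ)/n) - c ^ ((1:ℝ)/n)) := by
    refine aux_nonneg_deriv hh ?_ ?_
    · show (γ ((1-(0:ℝ)) • K + (0:ℝ) • L)).toReal ^ ((1:ℝ)/n)
        - ((1-(0:ℝ)) * c ^ ((1:ℝ)/n) + 0 * d ^ ((1:ℝ)/n)) = 0
      rw [hf0]; ring
    · filter_upwards [Ioo_mem_nhdsGT_of_mem (by norm_num : (0:ℝ) ∈ Set.Ico 0 1)]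
        with l hl
      have := hGBM l ⟨hl.1.le, hl.2.le⟩
      simp only [sub_le_iff_le_add, sub_nonneg]
      linarith
  -- algebra
  have e1 : c ^ (((n:ℝ)-1)/n) * c ^ ((1:ℝ)/n - 1) = 1 := by
    rw [← Real.rpow_add hc]
    have h : ((n:ℝ)-1)/n + ((1:ℝ)/n - 1) = 0 := by field_simp; ring
    rw [h, Real.rpow_zero]
  have e2 : c ^ (((n:ℝ)-1)/n) * c ^ ((1:ℝ)/n) = c := by
    rw [← Real.rpow_add hc]
    have h : ((n:ℝ)-1)/n + (1:ℝ)/n = 1 := by field_simp; ring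
    rw [h, Real.rpow_one]
  have hq : 0 < c ^ (((n:ℝ)-1)/n) := Real.rpow_pos_of_pos hc _
  have key := mul_le_mul_of_nonneg_left hE
    (by positivity : (0:ℝ) ≤ (n:ℝ) * c ^ (((n:ℝ)-1)/n))
  have hnn : (n:ℝ) * (1/n) = 1 := by field_simp
  have expand : (n:ℝ) * c ^ (((n:ℝ)-1)/n)
      * (1/n * c ^ ((1:ℝ)/n - 1) * D - (d ^ ((1:ℝ)/n) - c ^ ((1:ℝ)/n)))
      = D - (n:ℝ) * d ^ ((1:ℝ)/n) * c ^ (((n:ℝ)-1)/n) + (n:ℝ) * c := by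
    linear_combination D * e1 + (n:ℝ) * e2
      + (c ^ (((n:ℝ)-1)/n) * c ^ ((1:ℝ)/n - 1) * D) * hnn
  have hfinal : 0 ≤ D - (n:ℝ) * d ^ ((1:ℝ)/n) * c ^ (((n:ℝ)-1)/n) + (n:ℝ) * c := by
    rw [← expand]; nlinarith [key]
  linarith
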